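/- Let C : A × A → ℂ be a ℂ-bilinear map which is skew-symmetric (C(X,Y) = −C(Y,X) for all X, Y) and satisfies the cyclic cocycle condition C(XY,Z) + C(YZ,X) + C(ZX,Y) = 0 for all X, Y, Z ∈ A. Then there exists a matrix a ∈ A such that C(X,Y) = Tr(a·(XY − YX)) for all X, Y ∈ A. -/

import Mathlib

noncomputable section

/-- The algebra of `N × N` complex matrices. -/
abbrev Mat (N : ℕ) := Matrix (Fin N) (Fin N) ℂ

private lemma tr_mul_std {N : ℕ} (a : Mat N) (i j : Fin N) :
    Matrix.trace (a * Matrix.single i j 1) = a j i := by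
  simp [Matrix.trace, Matrix.diag, Matrix.mul_apply, Matrix.single, ite_and,
    Finset.sum_ite_eq]

/-- every skew-symmetric bilinear form on `Mat(N, ℂ)` satisfying the
cyclic cocycle condition `C(XY,Z) + C(YZ,X) + C(ZX,Y) = 0` is of the form
`C(X,Y) = Tr(a(XY − YX))` for some matrix `a`. -/
theorem stmt10 (N : ℕ)
    (C : Mat N →ₗ[ℂ] Mat N →ₗ[ℂ] ℂ)
    (hskew : ∀ X Y : Mat N, C X Y = - C Y X)
    (hcocycle : ∀ X Y Z : Mat N, C (X * Y) Z + C (Y * Z) X + C (Z * X) Y = 0) :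
    ∃ a : Mat N, ∀ X Y : Mat N, C X Y = Matrix.trace (a * (X * Y - Y * X)) := by
  rcases Nat.eq_zero_or_pos N with h0 | hpos
  · subst h0
    refine ⟨0, fun X Y => ?_⟩
    have hX : X = 0 := Subsingleton.elim _ _
    subst hX
    simp [Matrix.trace]
  · haveI : NeZero N := ⟨hpos.ne'⟩
    set E : Fin N → Fin N → Mat N := fun i j => Matrix.single i j 1 with hE
    set a : Mat N := Matrix.of (fun p q => C (E q 0) (E 0 p)) with ha
    refine ⟨a, ?_⟩
    have mulE : ∀ i j k l : Fin N, E i j * E k l = if j = k then E i l else 0 := by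
      intro i j k l
      by_cases h : j = k
      · subst h
        simp [hE]
      · simp [hE, h]
    have aval : ∀ p q : Fin N, a p q = C (E q 0) (E 0 p) := fun p q => rfl
    -- key computation on basis elements
    have key : ∀ i j k l : Fin N,
        C (E i j) (E k l) = Matrix.trace (a * (E i j * E k l - E k l * E i j)) := by
      intro i j k l
      have hc := hcocycle (E i 0) (E 0 j) (E k l)
      rw [mulE, mulE, mulE] at hc
      simp only [if_pos rfl] at hc
      rw [Matrix.mul_sub, Matrix.trace_sub, mulE, mulE]
      by_cases hjk : j = k <;> by_cases hli : l = i <;>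
        simp only [hjk, hli, if_true, if_false, eq_self_iff_true, map_zero,
          LinearMap.zero_apply, add_zero, zero_add, Matrix.mul_zero, Matrix.trace_zero] at hc ⊢ <;>
        simp only [hE, tr_mul_std, aval, sub_zero, zero_sub] at hc ⊢ <;>
      first
        | linear_combination hc - hskew (Matrix.single 0 i 1) (Matrix.single i 0 1)
        | linear_combination hc - hskew (Matrix.single 0 l 1) (Matrix.single i 0 1)
        | linear_combination hc
    -- bilinear extension
    let D : Mat N →ₗ[ℂ] Mat N →ₗ[ℂ] ℂ := LinearMap.mk₂ ℂ
      (fun X Y => Matrix.trace (a * (X * Y - Y * X)))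
      (by intro X X' Y
          simp only [add_mul, mul_add, Matrix.mul_sub, Matrix.mul_add, Matrix.trace_sub,
            Matrix.trace_add]
          ring)
      (by intro c X Y
          simp only [smul_mul_assoc, mul_smul_comm, ← smul_sub, Matrix.mul_smul,
            Matrix.trace_smul, smul_eq_mul])
      (by intro X Y Y'
          simp only [add_mul, mul_add, Matrix.mul_sub, Matrix.mul_add, Matrix.trace_sub,
            Matrix.trace_add]
          ring)
      (by intro c X Y
          simp only [smul_mul_assoc, mul_smul_comm, ← smul_sub, Matrix.mul_smul,
            Matrix.trace_smul, smul_eq_mul])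
    have hCD : C = D := by
      apply Module.Basis.ext (Matrix.stdBasis ℂ (Fin N) (Fin N))
      intro p
      apply Module.Basis.ext (Matrix.stdBasis ℂ (Fin N) (Fin N))
      intro q
      obtain ⟨p1, p2⟩ := p
      obtain ⟨q1, q2⟩ := q
      have := key p1 p2 q1 q2
      simpa [Matrix.stdBasis_eq_single, D, hE] using this
    intro X Y
    rw [hCD]
    rfl
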